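/- Let (A, B, E, E') be a C*-operator-valued infinitesimal probability space, let x = x* ∈ A, and set X = [[x, 0], [0, x]] ∈ Ã. Then there exists δ > 0 such that for all b, c ∈ B with ‖b‖ + ‖c‖ < δ, the elements I + ϱ_X([[b, c], [0, b]]) and 1 + ϱ_x(b) are invertible and ρ_X([[b, c], [0, b]]) := ϱ_X([[b, c], [0, b]]) (I + ϱ_X([[b, c], [0, b]]))⁻¹ = [[ρ_x(b), (Dρ_x)(b)(c) + ∂ρ_x(b)], [0, ρ_x(b)]], where Dρ_x is the Fréchet derivative of ρ_x and ∂ρ_x(b) = (1 + ϱ_x(b))⁻¹ ∂ϱ_x(b) (1 + ϱ_x(b))⁻¹. -/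

import Mathlib

open scoped BigOperators

variable {A B : Type*} [CStarAlgebra A] [CStarAlgebra B]

/-- `(A, B, E, E')` is a C*-operator-valued infinitesimal probability space, where the unital
C*-subalgebra `B ⊆ A` is realized via the isometric unital star-algebra embedding `ι : B → A`:
`E` is a bounded, completely positive, `B`-`B`-bimodule linear map with `E 1 = 1`, and `E'` is a
bounded, selfadjoint, `B`-`B`-bimodule linear map with `E' 1 = 0`. -/
structure IsCStarOVIProbSpace (ι : B →⋆ₐ[ℂ] A) (E E' : A →L[ℂ] B) : Prop where
  isometry : Isometry ι
  E_one : E 1 = 1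
  E_bimod : ∀ (b₁ b₂ : B) (a : A), E (ι b₁ * a * ι b₂) = b₁ * E a * b₂
  E_cp : ∀ (n : ℕ) (M : Matrix (Fin n) (Fin n) A),
      (∃ N : Matrix (Fin n) (Fin n) A, M = star N * N) →
      ∃ N' : Matrix (Fin n) (Fin n) B, M.map ⇑E = star N' * N'
  E'_one : E' 1 = 0
  E'_selfadj : ∀ a : A, E' (star a) = star (E' a)
  E'_bimod : ∀ (b₁ b₂ : B) (a : A), E' (ι b₁ * a * ι b₂) = b₁ * E' a * b₂

/-- `ϱ_z(b) = E(zb(1 − zb)⁻¹)`. -/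
noncomputable def varrhoT (ι : B →⋆ₐ[ℂ] A) (E : A →L[ℂ] B) (z : A) (b : B) : B :=
  E (z * ι b * Ring.inverse (1 - z * ι b))

/-- The ρ-transform `ρ_z(b) = ϱ_z(b)(1 + ϱ_z(b))⁻¹`. -/
noncomputable def rhoT (ι : B →⋆ₐ[ℂ] A) (E : A →L[ℂ] B) (z : A) (b : B) : B :=
  varrhoT ι E z b * Ring.inverse (1 + varrhoT ι E z b)

/-- `∂ϱ_z(b) = E'(zb(1 − zb)⁻¹)`. -/
noncomputable def dvarrhoT (ι : B →⋆ₐ[ℂ] A) (E' : A →L[ℂ] B) (z : A) (b : B) : B :=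
  E' (z * ι b * Ring.inverse (1 - z * ι b))

/-- The infinitesimal ρ-transform `∂ρ_z(b) = (1 + ϱ_z(b))⁻¹ ∂ϱ_z(b) (1 + ϱ_z(b))⁻¹`. -/
noncomputable def drhoT (ι : B →⋆ₐ[ℂ] A) (E E' : A →L[ℂ] B) (z : A) (b : B) : B :=
  Ring.inverse (1 + varrhoT ι E z b) * dvarrhoT ι E' z b * Ring.inverse (1 + varrhoT ι E z b)

open TrivSqZeroExt

/-- The map `Ẽ : Ã → B̃`, `[[a, a'], [0, a]] ↦ [[E a, E' a + E a'], [0, E a]]`, where the upper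
triangular algebra `Ã` (of matrices `[[a, a'], [0, a]]`) is realized as the trivial square-zero
extension `TrivSqZeroExt A A`. -/
noncomputable def tildeE (E E' : A →L[ℂ] B) (p : TrivSqZeroExt A A) : TrivSqZeroExt B B :=
  inl (E p.fst) + inr (E' p.fst + E p.snd)

/-- The embedding of `B̃` into `Ã` induced by `ι`. -/
noncomputable def tildeIota (ι : B →⋆ₐ[ℂ] A) (p : TrivSqZeroExt B B) : TrivSqZeroExt A A :=
  inl (ι p.fst) + inr (ι p.snd)

-- helper lemmas

lemma ringInverse_eq' {R : Type*} [MonoidWithZero R] {a y : R} (h1 : a * y = 1) (h2 : y * a = 1) :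
    Ring.inverse a = y :=
  Ring.inverse_unit (⟨a, y, h1, h2⟩ : Rˣ)

lemma mul_ringInverse_one_sub {R : Type*} [Ring R] {u : R} (h : IsUnit (1 - u)) :
    u * Ring.inverse (1 - u) = Ring.inverse (1 - u) - 1 := by
  obtain ⟨W, hW⟩ := h
  have hu : u = 1 - (W : R) := by rw [hW, sub_sub_cancel]
  rw [← hW, Ring.inverse_unit, hu, sub_mul, one_mul, W.mul_inv]

lemma mul_ringInverse_one_add {R : Type*} [Ring R] {P : R} (h : IsUnit (1 + P)) :
    P * Ring.inverse (1 + P) = 1 - Ring.inverse (1 + P) := by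
  have h' : IsUnit (1 - (-P)) := by simpa [sub_neg_eq_add] using h
  have h2 := mul_ringInverse_one_sub h'
  rw [sub_neg_eq_add, neg_mul] at h2
  have h3 := neg_eq_iff_eq_neg.mp h2
  rw [h3, neg_sub]

lemma norm_mul_ringInverse_one_sub_le {R : Type*} [NormedRing R] [CompleteSpace R] {u : R}
    (h : ‖u‖ < 1) : ‖u * Ring.inverse (1 - u)‖ ≤ ‖u‖ * (1 - ‖u‖)⁻¹ := by
  have hs := hasSum_geom_series_inverse u h
  have hs1 : HasSum (fun n : ℕ => u ^ (n + 1))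
      (Ring.inverse (1 - u) - ∑ i ∈ Finset.range 1, u ^ i) :=
    (hasSum_nat_add_iff' 1).mpr hs
  simp only [Finset.range_one, Finset.sum_singleton, pow_zero] at hs1
  have hg : HasSum (fun n : ℕ => ‖u‖ * ‖u‖ ^ n) (‖u‖ * (1 - ‖u‖)⁻¹) :=
    (hasSum_geometric_of_lt_one (norm_nonneg u) h).mul_left ‖u‖
  have hb : ∀ n : ℕ, ‖u ^ (n + 1)‖ ≤ ‖u‖ * ‖u‖ ^ n := fun n => by
    simpa [pow_succ'] using norm_pow_le' u n.succ_pos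
  have := tsum_of_norm_bounded hg hb
  rw [hs1.tsum_eq] at this
  rwa [mul_ringInverse_one_sub (isUnit_one_sub_of_norm_lt_one h)]


lemma tsze_inv_one_sub {R : Type*} [Ring R] (u v : R) (h : IsUnit (1 - u)) :
    Ring.inverse (1 - (inl u + inr v : TrivSqZeroExt R R)) =
      inl (Ring.inverse (1 - u)) + inr (Ring.inverse (1 - u) * v * Ring.inverse (1 - u)) := by
  set I := Ring.inverse (1 - u) with hI
  have e1 : (1 - u) * I = 1 := Ring.mul_inverse_cancel _ h
  have e2 : I * (1 - u) = 1 := Ring.inverse_mul_cancel _ h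
  have e1' : u * I = I - 1 := by
    have := sub_mul 1 u I; rw [e1, one_mul] at this
    rw [eq_sub_iff_add_eq, ← eq_sub_iff_add_eq'] at this
    exact this
  apply ringInverse_eq'
  · ext
    · simpa [fst_mul, smul_eq_mul, op_smul_eq_mul, mul_sub, sub_mul] using e1
    · simp only [snd_mul, smul_eq_mul, op_smul_eq_mul, fst_add, fst_inl, fst_inr, snd_add,
        snd_inl, snd_inr, fst_sub, snd_sub, fst_one, snd_one, add_zero, zero_add, sub_zero,
        zero_sub, neg_mul, one_mul]
      rw [show (1 - u) * (I * v * I) = ((1 - u) * I) * v * I by simp [mul_assoc], e1]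
      noncomm_ring
  · ext
    · simpa [fst_mul, smul_eq_mul, op_smul_eq_mul, mul_sub, sub_mul] using e2
    · simp only [snd_mul, smul_eq_mul, op_smul_eq_mul, fst_add, fst_inl, fst_inr, snd_add,
        snd_inl, snd_inr, fst_sub, snd_sub, fst_one, snd_one, add_zero, zero_add, sub_zero,
        zero_sub, neg_mul, one_mul, mul_neg, mul_one]
      rw [show I * v * I * (1 - u) = I * v * (I * (1 - u)) by simp [mul_assoc], e2]
      noncomm_ring

lemma tsze_prod {R : Type*} [Ring R] (u v : R) (h : IsUnit (1 - u)) :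
    (inl u + inr v : TrivSqZeroExt R R) * Ring.inverse (1 - (inl u + inr v)) =
      inl (u * Ring.inverse (1 - u)) +
        inr (Ring.inverse (1 - u) * v * Ring.inverse (1 - u)) := by
  rw [tsze_inv_one_sub u v h]
  set I := Ring.inverse (1 - u) with hI
  have e1' : u * I = I - 1 := by
    have e1 : (1 - u) * I = 1 := Ring.mul_inverse_cancel _ h
    have := sub_mul 1 u I; rw [e1, one_mul] at this
    rw [eq_sub_iff_add_eq, ← eq_sub_iff_add_eq'] at this
    exact this
  ext
  · simp [fst_mul, smul_eq_mul, op_smul_eq_mul]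
  · simp only [snd_mul, smul_eq_mul, op_smul_eq_mul, fst_add, fst_inl, fst_inr, snd_add,
      snd_inl, snd_inr, add_zero, zero_add]
    rw [show u * (I * v * I) = (u * I) * v * I by rw [mul_assoc, mul_assoc, mul_assoc], e1']
    noncomm_ring

lemma tsze_rho {R : Type*} [Ring R] (P Q : R) (h : IsUnit (1 + P)) :
    (inl P + inr Q : TrivSqZeroExt R R) * Ring.inverse (1 + (inl P + inr Q)) =
      inl (P * Ring.inverse (1 + P)) +
        inr (Ring.inverse (1 + P) * Q * Ring.inverse (1 + P)) := by
  have h' : IsUnit (1 - (-P)) := by rwa [sub_neg_eq_add]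
  have key : (1 : TrivSqZeroExt R R) + (inl P + inr Q) = 1 - (inl (-P) + inr (-Q)) := by
    ext <;> simp
  have key2 : (1 : R) - (-P) = 1 + P := sub_neg_eq_add 1 P
  have e4 : P * Ring.inverse (1 + P) = 1 - Ring.inverse (1 + P) := mul_ringInverse_one_add h
  rw [key, tsze_inv_one_sub (-P) (-Q) h', key2]
  set I := Ring.inverse (1 + P) with hI
  ext
  · simp [fst_mul, smul_eq_mul, op_smul_eq_mul]
  · simp only [snd_mul, smul_eq_mul, op_smul_eq_mul, fst_add, fst_inl, fst_inr, snd_add,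
      snd_inl, snd_inr, add_zero, zero_add, mul_neg, neg_mul]
    rw [show P * (I * Q * I) = (P * I) * Q * I by rw [mul_assoc, mul_assoc, mul_assoc], e4]
    noncomm_ring


/-- For a C*-operator-valued infinitesimal probability space `(A, B, E, E')`, a selfadjoint
`x ∈ A` and `X = [[x, 0], [0, x]]`, there is `δ > 0` such that for all `b, c ∈ B` with
`‖b‖ + ‖c‖ < δ` the elements `I + ϱ_X([[b, c], [0, b]])` and `1 + ϱ_x(b)` are invertible and
`ρ_X([[b, c], [0, b]]) = [[ρ_x(b), (Dρ_x)(b)(c) + ∂ρ_x(b)], [0, ρ_x(b)]]`. -/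
theorem rho_upper_triangular
    (ι : B →⋆ₐ[ℂ] A) (E E' : A →L[ℂ] B) (h : IsCStarOVIProbSpace ι E E')
    (x : A) (hx : star x = x) :
    ∃ δ > (0 : ℝ), ∀ b c : B, ‖b‖ + ‖c‖ < δ →
      IsUnit (1 - inl x * tildeIota ι (inl b + inr c)) ∧
      IsUnit (1 + tildeE E E' (inl x * tildeIota ι (inl b + inr c) *
          Ring.inverse (1 - inl x * tildeIota ι (inl b + inr c)))) ∧
      IsUnit (1 + varrhoT ι E x b) ∧
      DifferentiableAt ℂ (rhoT ι E x) b ∧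
      tildeE E E' (inl x * tildeIota ι (inl b + inr c) *
            Ring.inverse (1 - inl x * tildeIota ι (inl b + inr c))) *
          Ring.inverse (1 + tildeE E E' (inl x * tildeIota ι (inl b + inr c) *
            Ring.inverse (1 - inl x * tildeIota ι (inl b + inr c)))) =
        inl (rhoT ι E x b) + inr (fderiv ℂ (rhoT ι E x) b c + drhoT ι E E' x b) := by
  refine ⟨(4 * (‖x‖ + 1) * (‖E‖ + 1))⁻¹, by positivity, fun b c hbc => ?_⟩
  have hnι : ∀ b' : B, ‖ι b'‖ = ‖b'‖ := fun b' =>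
    h.isometry.norm_map_of_map_zero (map_zero ι) b'
  -- basic norm bounds
  have hxE : (0:ℝ) < ‖x‖ + 1 := by positivity
  have hEE : (0:ℝ) < ‖E‖ + 1 := by positivity
  have hu_lt : ‖x * ι b‖ < (4 * (‖E‖ + 1))⁻¹ := by
    have h1 : ‖x * ι b‖ ≤ ‖x‖ * ‖b‖ := by
      calc ‖x * ι b‖ ≤ ‖x‖ * ‖ι b‖ := norm_mul_le _ _
      _ = ‖x‖ * ‖b‖ := by rw [hnι]
    have h2 : ‖x‖ * ‖b‖ ≤ (‖x‖ + 1) * (‖b‖ + ‖c‖) := by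
      apply mul_le_mul (by linarith) (by linarith [norm_nonneg c]) (norm_nonneg b) (by positivity)
    have h3 : (‖x‖ + 1) * (‖b‖ + ‖c‖) < (‖x‖ + 1) * (4 * (‖x‖ + 1) * (‖E‖ + 1))⁻¹ :=
      mul_lt_mul_of_pos_left hbc hxE
    have h4 : (‖x‖ + 1) * (4 * (‖x‖ + 1) * (‖E‖ + 1))⁻¹ = (4 * (‖E‖ + 1))⁻¹ := by
      field_simp
    linarith
  have hu4 : ‖x * ι b‖ < 1/4 := by
    have : (4 * (‖E‖ + 1))⁻¹ ≤ 1/4 := by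
      rw [inv_le_comm₀ (by positivity) (by norm_num)]
      · nlinarith [norm_nonneg E]
    linarith
  have hu1 : ‖x * ι b‖ < 1 := by linarith
  have hw : IsUnit (1 - x * ι b) := isUnit_one_sub_of_norm_lt_one hu1
  -- bound on varrhoT
  have hPnorm : ‖varrhoT ι E x b‖ < 1/2 := by
    have h1 : ‖varrhoT ι E x b‖ ≤ ‖E‖ * ‖x * ι b * Ring.inverse (1 - x * ι b)‖ :=
      E.le_opNorm _
    have h2 := norm_mul_ringInverse_one_sub_le hu1
    have h3 : ‖x * ι b‖ * (1 - ‖x * ι b‖)⁻¹ ≤ 2 * ‖x * ι b‖ := by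
      rw [mul_comm (2:ℝ), ← div_eq_mul_inv, div_le_iff₀ (by linarith)]
      nlinarith [norm_nonneg (x * ι b)]
    have h4 : ‖E‖ * (2 * ‖x * ι b‖) < ‖E‖ * (2 * (4 * (‖E‖ + 1))⁻¹) + (4 * (‖E‖+1))⁻¹ := by
      nlinarith [norm_nonneg E, norm_nonneg (x * ι b)]
    have h5 : ‖E‖ * (2 * (4 * (‖E‖ + 1))⁻¹) + (4 * (‖E‖+1))⁻¹ ≤ 1/2 := by
      rw [show ‖E‖ * (2 * (4 * (‖E‖ + 1))⁻¹) + (4 * (‖E‖+1))⁻¹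
          = (2 * ‖E‖ + 1) * (4 * (‖E‖ + 1))⁻¹ by ring]
      rw [mul_inv_le_iff₀ (by positivity)]
      nlinarith [norm_nonneg E]
    have h6 : ‖E‖ * ‖x * ι b * Ring.inverse (1 - x * ι b)‖ ≤ ‖E‖ * (2 * ‖x * ι b‖) := by
      apply mul_le_mul_of_nonneg_left (le_trans h2 h3) (norm_nonneg E)
    linarith
  have hPunit : IsUnit (1 + varrhoT ι E x b) := by
    have := isUnit_one_sub_of_norm_lt_one (x := -(varrhoT ι E x b)) (by simpa using by linarith)
    simpa [sub_neg_eq_add] using this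
  -- continuous linear maps
  set ιL : B →L[ℂ] A := ⟨ι.toAlgHom.toLinearMap, h.isometry.continuous⟩ with hιL
  set T : B →L[ℂ] A := (ContinuousLinearMap.mul ℂ A x).comp ιL with hT
  have hTapp : ∀ b' : B, T b' = x * ι b' := fun _ => rfl
  set R₁ : A := Ring.inverse (1 - x * ι b) with hR₁
  set R₂ : B := Ring.inverse (1 + varrhoT ι E x b) with hR₂
  have hR₁u : (↑hw.unit⁻¹ : A) = R₁ := by
    have h1 := Ring.inverse_unit hw.unit
    rw [hw.unit_spec] at h1
    rw [hR₁]; exact h1.symm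
  have hR₂u : (↑hPunit.unit⁻¹ : B) = R₂ := by
    have h1 := Ring.inverse_unit hPunit.unit
    rw [hPunit.unit_spec] at h1
    rw [hR₂]; exact h1.symm
  -- derivative of varrhoT at b
  set Dvar : B →L[ℂ] B := E.comp ((ContinuousLinearMap.mulLeftRight ℂ A R₁ R₁).comp T) with hDvar
  have hα : HasFDerivAt (fun b' : B => 1 - x * ι b') (-T) b := T.hasFDerivAt.const_sub 1
  have hinvA : HasFDerivAt Ring.inverse
      (-(ContinuousLinearMap.mulLeftRight ℂ A R₁ R₁)) (1 - x * ι b) := by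
    have h1 := hasFDerivAt_ringInverse (𝕜 := ℂ) hw.unit
    rwa [hw.unit_spec, hR₁u] at h1
  have hφ : HasFDerivAt (fun b' : B => E (Ring.inverse (1 - x * ι b')) - 1)
      (E.comp ((-(ContinuousLinearMap.mulLeftRight ℂ A R₁ R₁)).comp (-T))) b :=
    by have h1 := hinvA.comp b hα; exact (E.hasFDerivAt.comp b h1).sub_const 1
  have hcont : Continuous fun b' : B => 1 - x * ι b' :=
    continuous_const.sub (continuous_const.mul h.isometry.continuous)
  have hev1 : ∀ᶠ b' in nhds b, IsUnit (1 - x * ι b') :=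
    hcont.continuousAt.preimage_mem_nhds (Units.isOpen.mem_nhds hw)
  have hEq1 : varrhoT ι E x =ᶠ[nhds b] fun b' : B => E (Ring.inverse (1 - x * ι b')) - 1 := by
    filter_upwards [hev1] with b' hb'
    rw [varrhoT, mul_ringInverse_one_sub hb', map_sub, h.E_one]
  have hvar : HasFDerivAt (varrhoT ι E x) Dvar b := by
    have h1 := hφ.congr_of_eventuallyEq hEq1
    have h2 : E.comp ((-(ContinuousLinearMap.mulLeftRight ℂ A R₁ R₁)).comp (-T)) = Dvar := by
      ext c'
      simp [hDvar]
    rwa [h2] at h1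
  have hvarapp : ∀ c' : B, Dvar c' = E (R₁ * (x * ι c') * R₁) := fun c' => by
    simp [hDvar, ContinuousLinearMap.mulLeftRight_apply]
    rfl
  -- derivative of rhoT at b
  set Drho : B →L[ℂ] B := (ContinuousLinearMap.mulLeftRight ℂ B R₂ R₂).comp Dvar with hDrho
  have hinvB : HasFDerivAt Ring.inverse
      (-(ContinuousLinearMap.mulLeftRight ℂ B R₂ R₂)) (1 + varrhoT ι E x b) := by
    have h1 := hasFDerivAt_ringInverse (𝕜 := ℂ) hPunit.unit
    rwa [hPunit.unit_spec, hR₂u] at h1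
  have hψ : HasFDerivAt (fun b' : B => 1 - Ring.inverse (1 + varrhoT ι E x b'))
      (-((-(ContinuousLinearMap.mulLeftRight ℂ B R₂ R₂)).comp Dvar)) b :=
    (hinvB.comp b (hvar.const_add 1)).const_sub 1
  have hev2 : ∀ᶠ b' in nhds b, IsUnit (1 + varrhoT ι E x b') := by
    have hcont2 : ContinuousAt (fun b' : B => 1 + varrhoT ι E x b') b :=
      continuousAt_const.add hvar.differentiableAt.continuousAt
    exact hcont2.preimage_mem_nhds (Units.isOpen.mem_nhds hPunit)
  have hEq2 : rhoT ι E x =ᶠ[nhds b] fun b' : B => 1 - Ring.inverse (1 + varrhoT ι E x b') := by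
    filter_upwards [hev2] with b' hb'
    rw [rhoT, mul_ringInverse_one_add hb']
  have hrho : HasFDerivAt (rhoT ι E x) Drho b := by
    have h1 := hψ.congr_of_eventuallyEq hEq2
    have h2 : -((-(ContinuousLinearMap.mulLeftRight ℂ B R₂ R₂)).comp Dvar) = Drho := by
      ext c'; simp [hDrho]
    rwa [h2] at h1
  have hfderiv : fderiv ℂ (rhoT ι E x) b c = R₂ * E (R₁ * (x * ι c) * R₁) * R₂ := by
    rw [hrho.fderiv]
    simp [hDrho, ContinuousLinearMap.mulLeftRight_apply, hvarapp]
  -- the square-zero extension computation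
  have hX : inl x * tildeIota ι (inl b + inr c)
      = inl (x * ι b) + inr (x * ι c) := by
    ext <;> simp [tildeIota, smul_eq_mul, op_smul_eq_mul]
  rw [hX]
  have hXunit : IsUnit (1 - (inl (x * ι b) + inr (x * ι c) : TrivSqZeroExt A A)) := by
    rw [isUnit_iff_isUnit_fst]
    simpa using hw
  have hprod := tsze_prod (x * ι b) (x * ι c) hw
  rw [hprod]
  have hEap : tildeE E E' (inl (x * ι b * Ring.inverse (1 - x * ι b)) +
        inr (Ring.inverse (1 - x * ι b) * (x * ι c) * Ring.inverse (1 - x * ι b)))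
      = inl (varrhoT ι E x b) + inr (dvarrhoT ι E' x b
          + E (R₁ * (x * ι c) * R₁)) := by
    ext
    · simp [tildeE, varrhoT, hR₁]
    · simp [tildeE, dvarrhoT, varrhoT, hR₁]
  rw [hEap]
  have hrho2 := tsze_rho (varrhoT ι E x b)
    (dvarrhoT ι E' x b + E (R₁ * (x * ι c) * R₁)) hPunit
  rw [hrho2]
  refine ⟨hXunit, ?_, hPunit, hrho.differentiableAt, ?_⟩
  · rw [isUnit_iff_isUnit_fst]
    simpa using hPunit
  · ext
    · simp [rhoT]
    · simp only [snd_add, snd_inl, snd_inr, zero_add]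
      rw [hfderiv]
      unfold drhoT
      rw [← hR₂]
      noncomm_ring
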